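/- The shift graph on pairs from {1, …, n} has chromatic number at least log_2(n); i.e., any proper coloring of the graph whose vertices are pairs (i,j) with 1 ≤ i < j ≤ n, with (i,j) adjacent to (j,k), uses at least log_2(n) colors. -/

import Mathlib

/-- The shift graph `S_n`: vertices are pairs `(i, j)` with `1 ≤ i < j ≤ n`,
and `(i, j)` is adjacent to `(j, k)`. -/
def shiftGraph (n : ℕ) : SimpleGraph {p : ℕ × ℕ // 1 ≤ p.1 ∧ p.1 < p.2 ∧ p.2 ≤ n} where
  Adj a b := a.1.2 = b.1.1 ∨ b.1.2 = a.1.1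
  symm := by
    constructor
    rintro a b (h | h)
    · exact Or.inr h
    · exact Or.inl h
  loopless := by
    constructor
    rintro ⟨a, ha⟩ (h | h) <;> simp_all <;> omega

lemma shiftGraph_card_lb (n C : ℕ)
    (f : {p : ℕ × ℕ // 1 ≤ p.1 ∧ p.1 < p.2 ∧ p.2 ≤ n} → Fin C)
    (hf : ∀ a b, (shiftGraph n).Adj a b → f a ≠ f b) :
    n ≤ 2 ^ C := by
  rcases Nat.eq_zero_or_pos C with hC | hC
  · subst hC
    by_contra h
    push_neg at h
    have h2 : 2 ≤ n := by omega
    exact (f ⟨(1, 2), by omega, by omega, h2⟩).elim0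
  · have : Inhabited (Fin C) := ⟨⟨0, hC⟩⟩
    set g : ℕ → Finset (Fin C) := fun i =>
      (Finset.Icc (i + 1) n).image
        (fun j => if h : 1 ≤ i ∧ i < j ∧ j ≤ n then f ⟨(i, j), h⟩ else default) with hg
    have key : ∀ i k, 1 ≤ i → i < k → k ≤ n → g i ≠ g k := by
      intro i k hi hik hk heq
      have hc : (if h : 1 ≤ i ∧ i < k ∧ k ≤ n then f ⟨(i, k), h⟩ else default) ∈ g i := by
        rw [hg]
        exact Finset.mem_image_of_mem _ (Finset.mem_Icc.mpr ⟨by omega, hk⟩)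
      rw [dif_pos ⟨hi, hik, hk⟩] at hc
      rw [heq, hg] at hc
      simp only [Finset.mem_image, Finset.mem_Icc] at hc
      obtain ⟨m, ⟨hm1, hm2⟩, hm3⟩ := hc
      rw [dif_pos ⟨by omega, by omega, hm2⟩] at hm3
      exact hf ⟨(i, k), hi, hik, hk⟩ ⟨(k, m), by omega, by omega, hm2⟩ (Or.inl rfl) hm3.symm
    have hinj : Set.InjOn g (Finset.Icc 1 n) := by
      intro i hi k hk h
      simp only [Finset.coe_Icc, Set.mem_Icc] at hi hk
      by_contra hne
      rcases lt_or_gt_of_ne hne with hlt | hlt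
      · exact key i k hi.1 hlt hk.2 h
      · exact key k i hk.1 hlt hi.2 h.symm
    have := Finset.card_le_card_of_injOn g (fun a _ => Finset.mem_univ (g a)) hinj
    simpa [Finset.card_univ] using this

/-- Any proper coloring of the shift graph on pairs from `{1, …, n}` uses at
least `log₂ n` colors. -/
theorem shiftGraph_chromatic_lb (n : ℕ) :
    ∀ (C : ℕ) (f : {p : ℕ × ℕ // 1 ≤ p.1 ∧ p.1 < p.2 ∧ p.2 ≤ n} → Fin C),
      (∀ a b, (shiftGraph n).Adj a b → f a ≠ f b) →
      Real.logb 2 (n : ℝ) ≤ C := by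
  intro C f hf
  have hn : n ≤ 2 ^ C := shiftGraph_card_lb n C f hf
  rcases Nat.eq_zero_or_pos n with h0 | h0
  · simp [h0, Real.logb_zero]
  · have h1 : Real.logb 2 (n : ℝ) ≤ Real.logb 2 ((2 : ℝ) ^ C) := by
      apply Real.logb_le_logb_of_le (by norm_num) (by exact_mod_cast h0)
      exact_mod_cast hn
    calc Real.logb 2 (n : ℝ) ≤ Real.logb 2 ((2 : ℝ) ^ C) := h1
      _ = C := by
        rw [Real.logb_pow, Real.logb_self_eq_one (by norm_num : (1:ℝ) < 2)]
        ring
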